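/- For every real λ > 0 and every nonnegative integer n, the analytic continuation of Erlang's loss function coincides with its elementary definition: ( λ · ∫₀^∞ e^{−λt} (1+t)^n dt )^{-1} = (λ^n/n!) / ∑_{j=0}^n λ^j/j!. -/

import Mathlib

open MeasureTheory

/-- The `n`-th partial sum of the Taylor series of the exponential function. -/
noncomputable def s (n : ℕ) (a : ℝ) : ℝ :=
  ∑ j ∈ Finset.range (n + 1), a ^ j / (Nat.factorial j : ℝ)

lemma key_int {a : ℝ} (ha : 0 < a) (k : ℕ) :
    ∫ t in Set.Ioi (0 : ℝ), Real.exp (-a * t) * t ^ k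
      = (Nat.factorial k : ℝ) / a ^ (k + 1) := by
  have h := Real.integral_rpow_mul_exp_neg_mul_Ioi
    (a := (k + 1 : ℝ)) (r := a) (by positivity) ha
  have h1 : ((k : ℝ) + 1) - 1 = (k : ℝ) := by ring
  rw [show ((k : ℝ) + 1) = ((k + 1 : ℕ) : ℝ) by push_cast; ring] at h
  push_cast at h
  rw [h1] at h
  have h2 : ∀ t ∈ Set.Ioi (0 : ℝ),
      t ^ (k : ℝ) * Real.exp (-(a * t)) = Real.exp (-a * t) * t ^ k := by
    intro t _
    rw [Real.rpow_natCast, neg_mul, mul_comm]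
  rw [setIntegral_congr_fun measurableSet_Ioi h2] at h
  rw [h, Real.Gamma_nat_eq_factorial,
    show ((k : ℝ) + 1) = ((k + 1 : ℕ) : ℝ) by push_cast; ring,
    Real.rpow_natCast, div_pow, one_pow]
  ring

lemma key_integrable {a : ℝ} (ha : 0 < a) (k : ℕ) :
    IntegrableOn (fun t : ℝ => Real.exp (-a * t) * t ^ k) (Set.Ioi 0) := by
  have h := integrableOn_rpow_mul_exp_neg_mul_rpow
    (p := 1) (s := (k : ℝ)) (b := a)
    (lt_of_lt_of_le neg_one_lt_zero (Nat.cast_nonneg k)) one_pos ha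
  refine (integrableOn_congr_fun (fun t ht => ?_) measurableSet_Ioi).mp h
  rw [Real.rpow_one, Real.rpow_natCast, mul_comm]

theorem stmt_4 (a : ℝ) (ha : 0 < a) (n : ℕ) :
    (a * ∫ t in Set.Ioi (0 : ℝ), Real.exp (-a * t) * (1 + t) ^ (n : ℝ))⁻¹
      = (a ^ n / (Nat.factorial n : ℝ)) / s n a := by
  have hpow : ∀ t ∈ Set.Ioi (0 : ℝ),
      Real.exp (-a * t) * (1 + t) ^ (n : ℝ)
        = ∑ k ∈ Finset.range (n + 1),
            (n.choose k : ℝ) * (Real.exp (-a * t) * t ^ k) := by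
    intro t _
    rw [Real.rpow_natCast, add_comm (1 : ℝ) t, add_pow]
    rw [Finset.mul_sum]
    refine Finset.sum_congr rfl fun k _ => by ring
  rw [setIntegral_congr_fun measurableSet_Ioi hpow]
  rw [integral_finset_sum _ (fun k _ => (key_integrable ha k).const_mul _)]
  have : ∀ k ∈ Finset.range (n + 1),
      (∫ t in Set.Ioi (0 : ℝ), (n.choose k : ℝ) * (Real.exp (-a * t) * t ^ k))
        = (n.choose k : ℝ) * ((Nat.factorial k : ℝ) / a ^ (k + 1)) := by
    intro k _
    rw [integral_const_mul, key_int ha k]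
  rw [Finset.sum_congr rfl this]
  -- Now a pure algebraic identity
  have hsum : a * ∑ k ∈ Finset.range (n + 1),
      (n.choose k : ℝ) * ((Nat.factorial k : ℝ) / a ^ (k + 1))
      = ((Nat.factorial n : ℝ) / a ^ n) * s n a := by
    rw [Finset.mul_sum]
    unfold s
    rw [Finset.mul_sum, ← Finset.sum_range_reflect (fun j => (Nat.factorial n : ℝ) / a ^ n * (a ^ j / (Nat.factorial j : ℝ)))]
    refine Finset.sum_congr rfl fun k hk => ?_
    rw [Finset.mem_range] at hk
    have hk' : k ≤ n := Nat.lt_succ_iff.mp hk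
    have h1 : n + 1 - 1 - k = n - k := by omega
    rw [h1]
    have hfac : (n.choose k : ℝ) * (Nat.factorial k : ℝ) * (Nat.factorial (n - k) : ℝ)
        = (Nat.factorial n : ℝ) := by
      rw [← Nat.cast_mul, ← Nat.cast_mul, Nat.choose_mul_factorial_mul_factorial hk']
    have hap : a ^ n = a ^ k * a ^ (n - k) := by
      rw [← pow_add, Nat.add_sub_cancel' hk']
    have hfk : (0 : ℝ) < Nat.factorial (n - k) := by positivity
    have ha' : a ≠ 0 := ha.ne'
    rw [← hfac, hap]
    field_simp
    ring
  rw [hsum]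
  have hs : 0 < s n a := by
    unfold s
    apply Finset.sum_pos
    · intro j _; positivity
    · exact ⟨0, Finset.mem_range.mpr (Nat.succ_pos n)⟩
  have hf : (0 : ℝ) < Nat.factorial n := by positivity
  rw [mul_inv, inv_div, div_eq_mul_inv (a ^ n / (Nat.factorial n : ℝ))]
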